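/- arXiv:1811.02253 — 2 statements merged into one kernel-verified Lean document; each statement's English description precedes it below -/
import Mathlib

section
/- Consider on ℝ³ the group operation (x,y,θ) ∗ (x',y',θ') = (x + x'·cos θ − y'·sin θ, y + x'·sin θ + y'·cos θ, θ + θ'). For every p ∈ ℝ³, the left translation q ↦ p ∗ q is an isometry of ℝ³ with the Euclidean distance; that is, the Euclidean distance on ℝ³ is left-invariant with respect to ∗. Consequently, ℝ³ (with Euclidean distance) and the universal cover of the Euclidean motion group SE(2) may be made isometric. -/
open Real

/-- The group operation of the universal cover of `SE(2)`, modeled on `ℝ³`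
(here with the Euclidean distance):
`(x,y,θ) ∗ (x',y',θ') = (x + x' cos θ − y' sin θ, y + x' sin θ + y' cos θ, θ + θ')`. -/
noncomputable def se2tMul (p q : EuclideanSpace ℝ (Fin 3)) : EuclideanSpace ℝ (Fin 3) :=
  WithLp.toLp 2 ![p 0 + q 0 * Real.cos (p 2) - q 1 * Real.sin (p 2),
    p 1 + q 0 * Real.sin (p 2) + q 1 * Real.cos (p 2),
    p 2 + q 2]

/-- The Euclidean distance on `ℝ³` is left-invariant for the group
operation `∗` of the universal cover of `SE(2)`: every left translation `q ↦ p ∗ q`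
is an isometry of Euclidean `ℝ³`. Consequently `ℝ³` and the universal cover of `SE(2)`
may be made isometric. -/
theorem se2tilde_leftInvariant_euclidean (p : EuclideanSpace ℝ (Fin 3)) :
    Isometry (fun q : EuclideanSpace ℝ (Fin 3) => se2tMul p q) := by
  apply Isometry.of_dist_eq
  intro a b
  simp only [EuclideanSpace.dist_eq, Fin.sum_univ_three, se2tMul]
  congr 1
  have h := Real.sin_sq_add_cos_sq (p 2)
  simp only [Matrix.cons_val_zero, Matrix.cons_val_one, Matrix.head_cons,
    Matrix.cons_val_two, Matrix.tail_cons]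
  simp only [Real.dist_eq, sq_abs]
  nlinarith [sq_nonneg (a 0 - b 0)]
end

section
/- Consider on ℝ³ the group operation (x,y,θ) ∗ (x',y',θ') = (x + x'·cos θ − y'·sin θ, y + x'·sin θ + y'·cos θ, θ + θ'). A subgroup N of this group is discrete (in the subspace topology of ℝ³) and normal if and only if there exists k ∈ ℕ (k ≥ 0, with k = 0 giving the trivial subgroup) such that N = N_k := {(0,0,2πkm) : m ∈ ℤ}. -/
open Real

/-- The universal cover of `SE(2)`, modeled as `ℝ³` with the group operation
`(x,y,θ) ∗ (x',y',θ') = (x + x' cos θ − y' sin θ, y + x' sin θ + y' cos θ, θ + θ')`. -/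
def SE2Cover : Type := ℝ × ℝ × ℝ

namespace SE2Cover

/-- The group operation of the universal cover of `SE(2)`. -/
noncomputable def mul' (p q : SE2Cover) : SE2Cover :=
  (p.1 + q.1 * Real.cos p.2.2 - q.2.1 * Real.sin p.2.2,
   p.2.1 + q.1 * Real.sin p.2.2 + q.2.1 * Real.cos p.2.2,
   p.2.2 + q.2.2)

noncomputable instance : Group SE2Cover where
  mul := mul'
  one := ((0 : ℝ), (0 : ℝ), (0 : ℝ))
  inv p := (-(p.1 * Real.cos p.2.2 + p.2.1 * Real.sin p.2.2),
            p.1 * Real.sin p.2.2 - p.2.1 * Real.cos p.2.2,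
            -p.2.2)
  mul_assoc a b c := by
    show mul' (mul' a b) c = mul' a (mul' b c)
    obtain ⟨a1, a2, a3⟩ := a
    obtain ⟨b1, b2, b3⟩ := b
    obtain ⟨c1, c2, c3⟩ := c
    simp only [mul', Real.cos_add, Real.sin_add]
    exact Prod.ext (by ring) (Prod.ext (by ring) (by ring))
  one_mul a := by
    show mul' ((0 : ℝ), (0 : ℝ), (0 : ℝ)) a = a
    obtain ⟨a1, a2, a3⟩ := a
    simp only [mul', Real.cos_zero, Real.sin_zero]
    exact Prod.ext (by ring) (Prod.ext (by ring) (by ring))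
  mul_one a := by
    show mul' a ((0 : ℝ), (0 : ℝ), (0 : ℝ)) = a
    obtain ⟨a1, a2, a3⟩ := a
    simp only [mul']
    exact Prod.ext (by ring) (Prod.ext (by ring) (by ring))
  inv_mul_cancel a := by
    show mul' _ a = ((0 : ℝ), (0 : ℝ), (0 : ℝ))
    obtain ⟨a1, a2, a3⟩ := a
    simp only [mul', Real.cos_neg, Real.sin_neg]
    exact Prod.ext (by ring) (Prod.ext (by ring) (by ring))

noncomputable instance : TopologicalSpace SE2Cover :=
  inferInstanceAs (TopologicalSpace (ℝ × ℝ × ℝ))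

end SE2Cover


noncomputable def se2mk (a b c : ℝ) : SE2Cover := (a, b, c)

lemma se2mk_mul (a b c x y z : ℝ) : se2mk a b c * se2mk x y z =
    se2mk (a + x * Real.cos c - y * Real.sin c) (b + x * Real.sin c + y * Real.cos c) (c + z) := rfl

lemma se2mk_inv (a b c : ℝ) : (se2mk a b c)⁻¹ =
    se2mk (-(a * Real.cos c + b * Real.sin c)) (a * Real.sin c - b * Real.cos c) (-c) := rfl

lemma one_def : (1 : SE2Cover) = se2mk 0 0 0 := rfl

lemma se2mk_inj {a b c x y z : ℝ} (h : se2mk a b c = se2mk x y z) : a = x ∧ b = y ∧ c = z := by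
  refine ⟨congrArg (fun p : ℝ × ℝ × ℝ => p.1) h, congrArg (fun p : ℝ × ℝ × ℝ => p.2.1) h,
    congrArg (fun p : ℝ × ℝ × ℝ => p.2.2) h⟩

lemma se2mk_ext {a b c x y z : ℝ} (h1 : a = x) (h2 : b = y) (h3 : c = z) : se2mk a b c = se2mk x y z := by
  rw [h1, h2, h3]

lemma conj_trans (a b x y θ : ℝ) :
    se2mk a b 0 * se2mk x y θ * (se2mk a b 0)⁻¹ =
      se2mk (x + a * (1 - Real.cos θ) + b * Real.sin θ) (y - a * Real.sin θ + b * (1 - Real.cos θ)) θ := by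
  rw [se2mk_inv, se2mk_mul, se2mk_mul]
  simp only [Real.cos_zero, Real.sin_zero]
  exact se2mk_ext (by ring) (by ring) (by ring)

lemma conj_rot (φ x y θ : ℝ) :
    se2mk 0 0 φ * se2mk x y θ * (se2mk 0 0 φ)⁻¹ =
      se2mk (x * Real.cos φ - y * Real.sin φ) (x * Real.sin φ + y * Real.cos φ) θ := by
  rw [se2mk_inv, se2mk_mul, se2mk_mul]
  exact se2mk_ext (by ring) (by ring) (by ring)

lemma conj_center (x y θ φ : ℝ)
    (h1 : Real.cos (θ + φ) = Real.cos θ) (h2 : Real.sin (θ + φ) = Real.sin θ) :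
    se2mk x y θ * se2mk 0 0 φ * (se2mk x y θ)⁻¹ = se2mk 0 0 φ := by
  rw [se2mk_inv, se2mk_mul, se2mk_mul]
  have hcs := Real.sin_sq_add_cos_sq θ
  refine se2mk_ext ?_ ?_ (by ring)
  · rw [h1, h2]; linear_combination (-x) * hcs
  · rw [h1, h2]; linear_combination (-y) * hcs

lemma central_form (N : Subgroup SE2Cover) (hd : DiscreteTopology N) (hN : N.Normal)
    {p : SE2Cover} (hp : p ∈ N) : ∃ m : ℤ, p = se2mk 0 0 (2 * π * m) := by
  obtain ⟨x, y, θ⟩ := p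
  -- step 1 : conjugation by translations
  have hp' : se2mk x y θ ∈ N := hp
  set f : ℝ × ℝ → N := fun a =>
    ⟨se2mk (x + a.1 * (1 - Real.cos θ) + a.2 * Real.sin θ)
      (y - a.1 * Real.sin θ + a.2 * (1 - Real.cos θ)) θ,
      by rw [← conj_trans]; exact hN.conj_mem _ hp' _⟩ with hf_def
  have hfc : Continuous f := by
    apply Continuous.subtype_mk
    show Continuous (fun a : ℝ × ℝ =>
      ((x + a.1 * (1 - Real.cos θ) + a.2 * Real.sin θ,
        y - a.1 * Real.sin θ + a.2 * (1 - Real.cos θ), θ) : ℝ × ℝ × ℝ))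
    fun_prop
  have h10 : f (1, 0) = f (0, 0) := PreconnectedSpace.constant inferInstance hfc
  have h10' := congrArg Subtype.val h10
  simp only [hf_def] at h10'
  obtain ⟨e1, e2, -⟩ := se2mk_inj h10'
  have hcos : Real.cos θ = 1 := by linarith
  have hsin : Real.sin θ = 0 := by linarith
  -- step 2 : conjugation by rotations
  set f2 : ℝ → N := fun φ =>
    ⟨se2mk (x * Real.cos φ - y * Real.sin φ) (x * Real.sin φ + y * Real.cos φ) θ,
      by rw [← conj_rot]; exact hN.conj_mem _ hp' _⟩ with hf2_def
  have hf2c : Continuous f2 := by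
    apply Continuous.subtype_mk
    show Continuous (fun φ : ℝ =>
      ((x * Real.cos φ - y * Real.sin φ, x * Real.sin φ + y * Real.cos φ, θ) : ℝ × ℝ × ℝ))
    fun_prop
  have hpi : f2 π = f2 0 := PreconnectedSpace.constant inferInstance hf2c
  have hpi' := congrArg Subtype.val hpi
  simp only [hf2_def] at hpi'
  obtain ⟨g1, g2, -⟩ := se2mk_inj hpi'
  simp only [Real.cos_pi, Real.sin_pi, Real.cos_zero, Real.sin_zero] at g1 g2
  have hx : x = 0 := by linarith
  have hy : y = 0 := by linarith
  obtain ⟨n, hn⟩ := (Real.cos_eq_one_iff θ).1 hcos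
  exact ⟨n, se2mk_ext hx hy (by linarith)⟩

/-- A subgroup `N` of the universal cover of `SE(2)` is discrete
(in the subspace topology of `ℝ³`) and normal if and only if
`N = N_k = {(0,0,2πkm) : m ∈ ℤ}` for some `k ∈ ℕ` (`k = 0` giving the trivial
subgroup). -/
theorem discrete_normal_subgroups_of_se2tilde (N : Subgroup SE2Cover) :
    (DiscreteTopology N ∧ N.Normal) ↔
      ∃ k : ℕ, (N : Set SE2Cover) =
        {p : SE2Cover | ∃ m : ℤ, p = ((0 : ℝ), (0 : ℝ), 2 * π * k * m)} := by
  constructor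
  · rintro ⟨hd, hN⟩
    set B : AddSubgroup ℤ :=
      { carrier := {m : ℤ | se2mk 0 0 (2 * π * m) ∈ N}
        zero_mem' := by
          have h0 : se2mk 0 0 (2 * π * ((0 : ℤ) : ℝ)) = 1 := by
            rw [one_def]; exact se2mk_ext rfl rfl (by push_cast; ring)
          show se2mk 0 0 (2 * π * ((0 : ℤ) : ℝ)) ∈ N
          rw [h0]; exact N.one_mem
        add_mem' := by
          intro a b ha hb
          have h := N.mul_mem ha hb
          rw [se2mk_mul] at h
          have heq : se2mk (0 + 0 * Real.cos (2 * π * (a : ℝ)) - 0 * Real.sin (2 * π * (a : ℝ)))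
              (0 + 0 * Real.sin (2 * π * (a : ℝ)) + 0 * Real.cos (2 * π * (a : ℝ)))
              (2 * π * (a : ℝ) + 2 * π * (b : ℝ)) = se2mk 0 0 (2 * π * ((a + b : ℤ) : ℝ)) :=
            se2mk_ext (by ring) (by ring) (by push_cast; ring)
          rw [heq] at h
          exact h
        neg_mem' := by
          intro a ha
          have h := N.inv_mem ha
          rw [se2mk_inv] at h
          have heq : se2mk (-(0 * Real.cos (2 * π * (a : ℝ)) + 0 * Real.sin (2 * π * (a : ℝ))))
              (0 * Real.sin (2 * π * (a : ℝ)) - 0 * Real.cos (2 * π * (a : ℝ)))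
              (-(2 * π * (a : ℝ))) = se2mk 0 0 (2 * π * ((-a : ℤ) : ℝ)) :=
            se2mk_ext (by ring) (by ring) (by push_cast; ring)
          rw [heq] at h
          exact h } with hB_def
    obtain ⟨g, hg⟩ := Int.subgroup_cyclic B
    refine ⟨g.natAbs, ?_⟩
    ext p
    simp only [Set.mem_setOf_eq, SetLike.mem_coe]
    constructor
    · intro hp
      obtain ⟨m, rfl⟩ := central_form N hd hN hp
      have hmB : m ∈ B := hp
      rw [hg, AddSubgroup.mem_closure_singleton] at hmB
      obtain ⟨c, hc⟩ := hmB
      have hdvd : (g.natAbs : ℤ) ∣ m := by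
        rw [Int.natAbs_dvd]
        exact ⟨c, by rw [← hc]; rw [smul_eq_mul]; ring⟩
      obtain ⟨m', hm'⟩ := hdvd
      exact ⟨m', se2mk_ext rfl rfl (by rw [hm']; push_cast [Nat.cast_natAbs]; ring)⟩
    · rintro ⟨m, rfl⟩
      have hmem : ((g.natAbs : ℤ) * m) ∈ B := by
        rw [hg, AddSubgroup.mem_closure_singleton]
        have hdvd : g ∣ (g.natAbs : ℤ) * m :=
          dvd_mul_of_dvd_left (Int.dvd_natAbs.mpr dvd_rfl) m
        obtain ⟨c, hc⟩ := hdvd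
        exact ⟨c, by rw [smul_eq_mul, hc]; ring⟩
      have hmem' : se2mk 0 0 (2 * π * (((g.natAbs : ℤ) * m : ℤ) : ℝ)) ∈ N := hmem
      have heq : se2mk 0 0 (2 * π * (((g.natAbs : ℤ) * m : ℤ) : ℝ)) =
          se2mk 0 0 (2 * π * (g.natAbs : ℝ) * (m : ℝ)) :=
        se2mk_ext rfl rfl (by push_cast [Nat.cast_natAbs]; ring)
      rw [heq] at hmem'
      exact hmem'
  · rintro ⟨k, hk⟩
    constructor
    · -- discreteness
      rw [discreteTopology_iff_isOpen_singleton]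
      intro x
      have hxN : (x : SE2Cover) ∈ (N : Set SE2Cover) := x.2
      rw [hk] at hxN
      obtain ⟨mx, hmx⟩ := hxN
      have hU : IsOpen ((fun p : SE2Cover => p.2.2) ⁻¹'
          Metric.ball ((x : SE2Cover).2.2) (2 * π)) := by
        apply IsOpen.preimage _ Metric.isOpen_ball
        show Continuous (fun p : ℝ × ℝ × ℝ => p.2.2)
        fun_prop
      have key : Subtype.val ⁻¹' ((fun p : SE2Cover => p.2.2) ⁻¹'
          Metric.ball ((x : SE2Cover).2.2) (2 * π)) = {x} := by
        ext y
        have hyN : (y : SE2Cover) ∈ (N : Set SE2Cover) := y.2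
        rw [hk] at hyN
        obtain ⟨my, hmy⟩ := hyN
        simp only [Set.mem_preimage, Metric.mem_ball, Set.mem_singleton_iff]
        constructor
        · intro hdist
          rw [Real.dist_eq, hmx, hmy] at hdist
          have hthird : ((2 : ℝ) * π * k * my) - 2 * π * k * mx =
              2 * π * (((k : ℤ) * my - (k : ℤ) * mx : ℤ) : ℝ) := by push_cast; ring
          have hkk : (k : ℤ) * my = (k : ℤ) * mx := by
            by_contra hne
            have h1 : (1 : ℤ) ≤ |(k : ℤ) * my - (k : ℤ) * mx| := by
              have hne0 : ((k : ℤ) * my - (k : ℤ) * mx) ≠ 0 := fun h => hne (by omega)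
              exact Int.one_le_abs hne0
            have h1' : (1 : ℝ) ≤ |((((k : ℤ) * my - (k : ℤ) * mx : ℤ)) : ℝ)| := by
              rw [← Int.cast_abs]
              exact_mod_cast h1
            have habs : |(2 : ℝ) * π * k * my - 2 * π * k * mx| =
                2 * π * |((((k : ℤ) * my - (k : ℤ) * mx : ℤ)) : ℝ)| := by
              rw [hthird, abs_mul, abs_of_pos (by positivity : (0:ℝ) < 2 * π)]
            rw [habs] at hdist
            nlinarith [Real.pi_pos]
          apply Subtype.ext
          rw [hmx, hmy]
          have : ((k : ℝ)) * my = (k : ℝ) * mx := by exact_mod_cast hkk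
          have h3 : (2 : ℝ) * π * k * my = 2 * π * k * mx := by
            rw [mul_assoc, mul_assoc, mul_assoc, mul_assoc, this]
          rw [h3]
        · rintro rfl
          rw [Real.dist_eq, sub_self, abs_zero]
          positivity
      rw [← key]
      exact IsOpen.preimage continuous_subtype_val hU
    · -- normality
      constructor
      intro n hn gg
      have hn' : n ∈ (N : Set SE2Cover) := hn
      rw [hk] at hn'
      obtain ⟨m, rfl⟩ := hn'
      obtain ⟨a, b, θ⟩ := gg
      have h1 : Real.cos (θ + 2 * π * k * m) = Real.cos θ := by
        have : θ + 2 * π * (k : ℝ) * (m : ℝ) = θ + (((k : ℤ) * m : ℤ) : ℝ) * (2 * π) := by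
          push_cast; ring
        rw [this, Real.cos_add_int_mul_two_pi]
      have h2 : Real.sin (θ + 2 * π * k * m) = Real.sin θ := by
        have : θ + 2 * π * (k : ℝ) * (m : ℝ) = θ + (((k : ℤ) * m : ℤ) : ℝ) * (2 * π) := by
          push_cast; ring
        rw [this, Real.sin_add_int_mul_two_pi]
      show se2mk a b θ * se2mk 0 0 (2 * π * k * m) * (se2mk a b θ)⁻¹ ∈ N
      rw [conj_center a b θ (2 * π * k * m) h1 h2]
      exact hn
end
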